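/- Let Λ = {λ_n} be a sequence of distinct points in the open unit disk 𝔻 satisfying the Blaschke condition which is an interpolating sequence for H^∞, and let Λ = Λ₀ ∪ Λ₁ be any partition of Λ into two disjoint subsets with Blaschke products B₀ and B₁ respectively. Then there exists η > 0 such that |B₀(μ)| ≥ η for every μ ∈ Λ₁ and |B₁(μ)| ≥ η for every μ ∈ Λ₀. -/

import Mathlib

/-- The normalized Möbius transform `b_λ(z)`; for `λ = 0` it is `z`. -/
noncomputable def moeb (l z : ℂ) : ℂ :=
  if l = 0 then z
  else ((‖l‖ : ℂ) / l) * ((z - l) / (1 - (starRingEnd ℂ) l * z))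

/-- The open unit disk. -/
def unitDisk : Set ℂ := Metric.ball 0 1

/-- The Blaschke product of the subsequence of `Λ` indexed by `S`. -/
noncomputable def bprod (Λ : ℕ → ℂ) (S : Set ℕ) (z : ℂ) : ℂ :=
  ∏' n : S, moeb (Λ n) z

/-- The pseudohyperbolic disk `D(λ, δ)`. -/
def phDisk (l : ℂ) (δ : ℝ) : Set ℂ := {z ∈ unitDisk | ‖moeb l z‖ < δ}

/-- A bounded analytic function on the unit disk. -/
def BoundedAnalyticOnDisk (f : ℂ → ℂ) : Prop :=
  DifferentiableOn ℂ f unitDisk ∧ ∃ C : ℝ, ∀ z ∈ unitDisk, ‖f z‖ ≤ C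

/-- `Λ` is an interpolating sequence for `H^∞`. -/
def IsInterpolatingSeq (Λ : ℕ → ℂ) : Prop :=
  ∀ v : ℕ → ℂ, (∃ C : ℝ, ∀ n, ‖v n‖ ≤ C) →
    ∃ f : ℂ → ℂ, BoundedAnalyticOnDisk f ∧ ∀ n, f (Λ n) = v n

/-- `Λ` is a weak interpolating sequence for `H^∞`. -/
def IsWeakInterpolatingSeq (Λ : ℕ → ℂ) : Prop :=
  ∃ φ : ℕ → ℂ → ℂ, ∃ C : ℝ,
    (∀ n, DifferentiableOn ℂ (φ n) unitDisk) ∧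
    (∀ n k, φ n (Λ k) = if n = k then 1 else 0) ∧
    (∀ n, ∀ z ∈ unitDisk, ‖φ n z‖ ≤ C)

/-- The Carleson condition for `Λ`. -/
def CarlesonCond (Λ : ℕ → ℂ) : Prop :=
  ∃ δc : ℝ, 0 < δc ∧ ∀ n, δc ≤ ∏' k : {k : ℕ // k ≠ n}, ‖moeb (Λ k) (Λ n)‖

section Aux
open Metric Set Complex Filter


noncomputable def mm (a z : ℂ) : ℂ := (z - a) / (1 - (starRingEnd ℂ) a * z)

lemma denom_ne (a z : ℂ) (ha : ‖a‖ < 1) (hz : ‖z‖ < 1) :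
    1 - (starRingEnd ℂ) a * z ≠ 0 := by
  intro h
  have h1 : (starRingEnd ℂ) a * z = 1 := by linear_combination -h
  have := congrArg (‖·‖) h1
  simp [map_mul] at this
  nlinarith [norm_nonneg a, norm_nonneg z]

lemma mm_lt_one (a z : ℂ) (ha : ‖a‖ < 1) (hz : ‖z‖ < 1) :
    ‖mm a z‖ < 1 := by
  have hd := denom_ne a z ha hz
  have hid : Complex.normSq (1 - (starRingEnd ℂ) a * z) - Complex.normSq (z - a)
      = (1 - Complex.normSq a) * (1 - Complex.normSq z) := by
    simp [Complex.normSq_apply, Complex.mul_re, Complex.mul_im, Complex.sub_re, Complex.sub_im,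
      Complex.one_re, Complex.one_im, Complex.conj_re, Complex.conj_im]
    ring
  have ha' : Complex.normSq a < 1 := by rw [← Complex.sq_norm]; nlinarith [norm_nonneg a]
  have hz' : Complex.normSq z < 1 := by rw [← Complex.sq_norm]; nlinarith [norm_nonneg z]
  have hlt : Complex.normSq (z - a) < Complex.normSq (1 - (starRingEnd ℂ) a * z) := by nlinarith
  have h0 : 0 < ‖1 - (starRingEnd ℂ) a * z‖ := by
    simpa [norm_pos_iff] using hd
  rw [mm, norm_div, div_lt_one h0]
  rw [← Real.sqrt_lt_sqrt_iff (Complex.normSq_nonneg _)] at hlt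
  simpa [Complex.norm_def] using hlt

lemma mm_inv (a z : ℂ) (ha : ‖a‖ < 1) (hz : ‖z‖ < 1) :
    mm (-a) (mm a z) = z := by
  have hd := denom_ne a z ha hz
  have h1 := denom_ne a a ha ha
  simp only [mm, map_neg, neg_mul, sub_neg_eq_add]
  rw [div_eq_iff (by rw [show 1 + (starRingEnd ℂ) a * ((z - a) / (1 - (starRingEnd ℂ) a * z))
    = (1 - (starRingEnd ℂ) a * a) / (1 - (starRingEnd ℂ) a * z) by
      rw [eq_div_iff hd, add_mul, mul_assoc, div_mul_cancel₀ _ hd]; ring]; exact div_ne_zero h1 hd)]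
  linear_combination (div_mul_cancel₀ (z - a) hd)

lemma mm_diff (a : ℂ) (ha : ‖a‖ < 1) :
    DifferentiableOn ℂ (mm a) (ball 0 1) := by
  apply DifferentiableOn.div
  · exact (differentiable_id.sub_const a).differentiableOn
  · exact ((differentiable_const _).sub ((differentiable_const _).mul differentiable_id)).differentiableOn
  · intro z hz
    exact denom_ne a z ha (by simpa [mem_ball_zero_iff] using hz)

lemma mm_mapsTo (a : ℂ) (ha : ‖a‖ < 1) :
    Set.MapsTo (mm a) (ball 0 1) (ball 0 1) := by
  intro z hz
  simp only [mem_ball_zero_iff] at hz ⊢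
  exact mm_lt_one a z ha hz

lemma schwarzPick (f : ℂ → ℂ) (hf : DifferentiableOn ℂ f (ball 0 1)) (C : ℝ)
    (hC : ∀ z ∈ ball (0:ℂ) 1, ‖f z‖ ≤ C) (a : ℂ) (ha : ‖a‖ < 1)
    (hfa : f a = 0) (z : ℂ) (hz : ‖z‖ < 1) :
    ‖f z‖ ≤ C * ‖mm a z‖ := by
  have ha' : ‖-a‖ < 1 := by simpa using ha
  set h : ℂ → ℂ := f ∘ mm (-a) with hh
  have hdiff : DifferentiableOn ℂ h (ball 0 1) :=
    hf.comp (mm_diff (-a) ha') (mm_mapsTo (-a) ha')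
  have h0 : h 0 = 0 := by
    simp only [hh, Function.comp_apply, mm]
    simpa using hfa
  have key : ∀ ε > 0, ‖f z‖ ≤ (C + ε) * ‖mm a z‖ := by
    intro ε hε
    have hC0 : 0 ≤ C := (norm_nonneg _).trans (hC a (mem_ball_zero_iff.2 ha))
    have hmaps : Set.MapsTo h (ball 0 1) (ball (h 0) (C + ε)) := by
      intro w hw
      rw [h0, mem_ball_zero_iff]
      calc ‖h w‖ ≤ C := hC _ (mm_mapsTo (-a) ha' hw)
        _ < C + ε := by linarith
    have hw : mm a z ∈ ball (0:ℂ) 1 := mem_ball_zero_iff.2 (mm_lt_one a z ha hz)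
    have := Complex.dist_le_div_mul_dist_of_mapsTo_ball hdiff (hmaps.mono_right ball_subset_closedBall) hw
    rw [h0, div_one] at this
    have heval : h (mm a z) = f z := by
      simp only [hh, Function.comp_apply, mm_inv a z ha hz]
    rw [heval] at this
    simpa [Complex.dist_eq] using this
  by_contra hcon
  push_neg at hcon
  set m := ‖mm a z‖ with hm
  set F := ‖f z‖ with hF
  have hm0 : 0 < m := by
    rcases (norm_nonneg (mm a z)).lt_or_eq with h | h
    · exact h
    · exfalso
      have h1 := key 1 one_pos
      have hm' : m = 0 := by rw [hm, ← h]
      rw [hm', mul_zero] at hcon h1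
      exact absurd (h1.trans_lt hcon) (lt_irrefl _)
  have hkey := key ((F - C * m) / (2 * m)) (by
    have : 0 < F - C * m := by linarith
    positivity)
  have heq : (C + (F - C * m) / (2 * m)) * m = C * m + (F - C * m) / 2 := by
    field_simp
  rw [heq] at hkey
  linarith

lemma mm_self (a : ℂ) : mm a a = 0 := by simp [mm]

lemma mm_ne_zero (a z : ℂ) (hne : z ≠ a) : mm a z ≠ 0 ∨ 1 - (starRingEnd ℂ) a * z = 0 := by
  by_cases hd : 1 - (starRingEnd ℂ) a * z = 0
  · exact Or.inr hd
  · exact Or.inl (by simp [mm, div_eq_zero_iff, sub_eq_zero, hne, hd])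

lemma divOut (f : ℂ → ℂ) (hf : DifferentiableOn ℂ f (ball 0 1)) (C : ℝ)
    (hC : ∀ z ∈ ball (0:ℂ) 1, ‖f z‖ ≤ C) (a : ℂ) (ha : ‖a‖ < 1)
    (hfa : f a = 0) :
    ∃ g : ℂ → ℂ, DifferentiableOn ℂ g (ball 0 1) ∧
      (∀ z ∈ ball (0:ℂ) 1, f z = g z * mm a z) ∧
      (∀ z ∈ ball (0:ℂ) 1, ‖g z‖ ≤ C) := by
  have haball : a ∈ ball (0:ℂ) 1 := mem_ball_zero_iff.2 ha
  set F : ℂ → ℂ := fun w => f w * (1 - (starRingEnd ℂ) a * w) with hFdef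
  have hFdiff : DifferentiableOn ℂ F (ball 0 1) :=
    hf.mul ((differentiable_const _).sub ((differentiable_const _).mul
      differentiable_id)).differentiableOn
  set g : ℂ → ℂ := dslope F a with hgdef
  have hgdiff : DifferentiableOn ℂ g (ball 0 1) :=
    (differentiableOn_dslope (isOpen_ball.mem_nhds haball)).mpr hFdiff
  have hfact : ∀ z ∈ ball (0:ℂ) 1, f z = g z * mm a z := by
    intro z hz
    rw [mem_ball_zero_iff] at hz
    by_cases hza : z = a
    · rw [hza, hfa, mm_self, mul_zero]
    · have hd := denom_ne a z ha hz
      rw [hgdef, dslope_of_ne F hza, slope_def_field, hFdef]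
      simp only [hfa, zero_mul, sub_zero]
      rw [mm]
      have hza' : z - a ≠ 0 := sub_ne_zero.2 hza
      field_simp
  refine ⟨g, hgdiff, hfact, ?_⟩
  have hbnd : ∀ w ∈ ball (0:ℂ) 1, w ≠ a → ‖g w‖ ≤ C := by
    intro w hw hwa
    rw [mem_ball_zero_iff] at hw
    have hd := denom_ne a w ha hw
    have hmne : mm a w ≠ 0 := by
      rcases mm_ne_zero a w hwa with h | h
      · exact h
      · exact absurd h hd
    have h1 := schwarzPick f hf C hC a ha hfa w hw
    rw [hfact w (mem_ball_zero_iff.2 hw), norm_mul] at h1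
    have hm0 : 0 < ‖mm a w‖ := norm_pos_iff.mpr hmne
    calc ‖g w‖ = ‖g w‖ * ‖mm a w‖ / ‖mm a w‖ := by
          field_simp
      _ ≤ C * ‖mm a w‖ / ‖mm a w‖ := by gcongr
      _ = C := by field_simp
  intro z hz
  by_cases hza : z = a
  · subst hza
    have hcont : ContinuousAt g z :=
      (hgdiff.differentiableAt (isOpen_ball.mem_nhds hz)).continuousAt
    have htend : Filter.Tendsto (fun w => ‖g w‖) (nhdsWithin z {z}ᶜ)
        (nhds (‖g z‖)) :=
      (continuous_norm.continuousAt.comp hcont).tendsto.mono_left nhdsWithin_le_nhds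
    refine le_of_tendsto htend ?_
    have hball : ∀ᶠ w in nhdsWithin z {z}ᶜ, w ∈ ball (0:ℂ) 1 :=
      eventually_nhdsWithin_of_eventually_nhds (isOpen_ball.eventually_mem hz)
    filter_upwards [hball, self_mem_nhdsWithin] with w hw hwz
    exact hbnd w hw hwz
  · exact hbnd z hz hza

lemma finBound (C : ℝ) (a : ℕ → ℂ) (hainj : Function.Injective a)
    (hamem : ∀ n, ‖a n‖ < 1) (S : Finset ℕ) :
    ∀ f : ℂ → ℂ, DifferentiableOn ℂ f (ball 0 1) →
      (∀ z ∈ ball (0:ℂ) 1, ‖f z‖ ≤ C) →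
      (∀ k ∈ S, f (a k) = 0) →
      ∀ z, ‖z‖ < 1 →
        ‖f z‖ ≤ C * ∏ k ∈ S, ‖mm (a k) z‖ := by
  classical
  induction S using Finset.induction_on with
  | empty => intro f hf hC _ z hz; simpa using hC z (mem_ball_zero_iff.2 hz)
  | @insert j S hj ih =>
    intro f hf hC hS z hz
    have hfj : f (a j) = 0 := hS j (Finset.mem_insert_self j S)
    obtain ⟨g, hgdiff, hfact, hgbnd⟩ := divOut f hf C hC (a j) (hamem j) hfj
    have hgS : ∀ k ∈ S, g (a k) = 0 := by
      intro k hk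
      have hkj : a k ≠ a j := fun h => hj (hainj h ▸ hk)
      have hd := denom_ne (a j) (a k) (hamem j) (hamem k)
      have hmne : mm (a j) (a k) ≠ 0 := by
        rcases mm_ne_zero (a j) (a k) hkj with h | h
        · exact h
        · exact absurd h hd
      have h0 : (0:ℂ) = g (a k) * mm (a j) (a k) := by
        rw [← hfact (a k) (mem_ball_zero_iff.2 (hamem k)), hS k (Finset.mem_insert_of_mem hk)]
      rcases mul_eq_zero.1 h0.symm with h | h
      · exact h
      · exact absurd h hmne
    have hg := ih g hgdiff hgbnd hgS z hz
    rw [hfact z (mem_ball_zero_iff.2 hz), norm_mul, Finset.prod_insert hj]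
    calc ‖g z‖ * ‖mm (a j) z‖
        ≤ (C * ∏ k ∈ S, ‖mm (a k) z‖) * ‖mm (a j) z‖ := by
          exact mul_le_mul_of_nonneg_right hg (norm_nonneg _)
      _ = C * (‖mm (a j) z‖ * ∏ k ∈ S, ‖mm (a k) z‖) := by ring


lemma abs_moeb_eq (a z : ℂ) : ‖moeb a z‖ = ‖mm a z‖ := by
  by_cases h : a = 0
  · simp [moeb, mm, h]
  · have h0 : ‖a‖ ≠ 0 := norm_ne_zero_iff.mpr h
    rw [moeb, if_neg h, norm_mul, mm, norm_div, Complex.norm_real,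
      norm_norm, div_self h0, one_mul]

lemma partBound (Λ : ℕ → ℂ) (hinj : Function.Injective Λ)
    (hmem : ∀ n, Λ n ∈ unitDisk) (hint : IsInterpolatingSeq Λ)
    (A B : Set ℕ) (hdisj : Disjoint A B) :
    ∃ η : ℝ, 0 < η ∧ ∀ n ∈ B, η ≤ ‖bprod Λ A (Λ n)‖ := by
  classical
  have hmem' : ∀ n, ‖Λ n‖ < 1 := by
    intro n
    have := hmem n
    simpa [unitDisk, mem_ball_zero_iff] using this
  set v : ℕ → ℂ := fun k => if k ∈ B then 1 else 0 with hv
  obtain ⟨f, ⟨hfd, C, hC⟩, hfv⟩ := hint v ⟨1, by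
    intro n; by_cases h : n ∈ B <;> simp [hv, h]⟩
  set C' : ℝ := max C 1 with hC'
  have hC'1 : (1:ℝ) ≤ C' := le_max_right _ _
  have hC'0 : (0:ℝ) < C' := lt_of_lt_of_le one_pos hC'1
  have hfd' : DifferentiableOn ℂ f (ball 0 1) := hfd
  have hCb : ∀ z ∈ ball (0:ℂ) 1, ‖f z‖ ≤ C' := fun z hz =>
    (hC z hz).trans (le_max_left _ _)
  refine ⟨1 / C', by positivity, ?_⟩
  intro n hn
  have keyfin : ∀ F : Finset ↥A,
      1 / C' ≤ ‖∏ k ∈ F, moeb (Λ ↑k) (Λ n)‖ := by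
    intro F
    set S : Finset ℕ := F.map ⟨Subtype.val, Subtype.val_injective⟩ with hS
    have hzeros : ∀ k ∈ S, f (Λ k) = 0 := by
      intro k hk
      rw [hS, Finset.mem_map] at hk
      obtain ⟨k', _, hk'⟩ := hk
      have hkA : k ∈ A := hk' ▸ k'.2
      have hkB : k ∉ B := fun h => (Set.disjoint_left.1 hdisj) hkA h
      rw [hfv k, hv]
      simp [hkB]
    have hb := finBound C' Λ hinj hmem' S f hfd' hCb hzeros (Λ n) (hmem' n)
    have hfn : f (Λ n) = 1 := by rw [hfv n, hv]; simp [hn]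
    rw [hfn] at hb
    simp only [norm_one] at hb
    have habs : ‖∏ k ∈ F, moeb (Λ ↑k) (Λ n)‖
        = ∏ k ∈ S, ‖mm (Λ k) (Λ n)‖ := by
      rw [Complex.norm_prod, hS, Finset.prod_map]
      simp only [Function.Embedding.coeFn_mk]
      exact Finset.prod_congr rfl fun k _ => abs_moeb_eq (Λ ↑k) (Λ n)
    rw [habs]
    rw [div_le_iff₀ hC'0]
    linarith [hb]
  by_cases hMul : Multipliable (fun k : ↥A => moeb (Λ ↑k) (Λ n))
  · have hprod := hMul.hasProd
    have htend : Filter.Tendsto (fun F : Finset ↥A =>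
        ‖∏ k ∈ F, moeb (Λ ↑k) (Λ n)‖) Filter.atTop
        (nhds (‖∏' k : ↥A, moeb (Λ ↑k) (Λ n)‖)) :=
      (continuous_norm.tendsto _).comp hprod
    exact ge_of_tendsto' htend keyfin
  · rw [bprod, tprod_eq_one_of_not_multipliable hMul]
    simp only [norm_one]
    rw [div_le_one hC'0]
    exact hC'1

end Aux

theorem stmt11 (Λ : ℕ → ℂ) (hinj : Function.Injective Λ)
    (hmem : ∀ n, Λ n ∈ unitDisk)
    (hBl : Summable (fun n => 1 - ‖Λ n‖))
    (hint : IsInterpolatingSeq Λ)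
    (Λ₀ Λ₁ : Set ℕ) (hpart : Λ₀ ∪ Λ₁ = Set.univ) (hdisj : Disjoint Λ₀ Λ₁) :
    ∃ η : ℝ, 0 < η ∧
      (∀ n ∈ Λ₁, η ≤ ‖bprod Λ Λ₀ (Λ n)‖) ∧
      (∀ n ∈ Λ₀, η ≤ ‖bprod Λ Λ₁ (Λ n)‖) := by
  obtain ⟨η₀, hη₀, h₀⟩ := partBound Λ hinj hmem hint Λ₀ Λ₁ hdisj
  obtain ⟨η₁, hη₁, h₁⟩ := partBound Λ hinj hmem hint Λ₁ Λ₀ hdisj.symm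
  exact ⟨min η₀ η₁, lt_min hη₀ hη₁,
    fun n hn => (min_le_left _ _).trans (h₀ n hn),
    fun n hn => (min_le_right _ _).trans (h₁ n hn)⟩
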